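/- Let F(x) = F̂(x) + g(x) where F̂ is convex on B and g is β-strongly convex on B, and let the sequence (x_t) be defined by x_{t+1} = argmin_{x ∈ B} (1/2)‖x − (x_t − η v_t)‖₂² + η g(x), where v_t is any vector and w_t denotes a subgradient of F̂ at x_t. Then for any x ∈ B, ∑_{t=1}^T [ F̂(x_t) + g(x_{t+1}) − F̂(x) − g(x) ] ≤ ‖x − x₁‖₂²/(2η) + (η/2)∑_{t=1}^T ‖v_t‖₂² + ∑_{t=1}^T ⟨x − x_t, v_t − w_t⟩ − (β/2)∑_{t=1}^T ‖x − x_{t+1}‖₂². -/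

import Mathlib

open scoped BigOperators

lemma aux_limit_real (K D : ℝ) (hK0 : 0 ≤ K)
    (h : ∀ s : ℝ, 0 < s → s ≤ 1 → K * (1 - s) ≤ D) : K ≤ D := by
  refine le_of_forall_pos_le_add fun ε hε => ?_
  set s : ℝ := min 1 (ε / (K + 1)) with hsdef
  have hs0 : 0 < s := lt_min one_pos (by positivity)
  have hs1 : s ≤ 1 := min_le_left _ _
  have h' := h s hs0 hs1
  have hsK : s * K ≤ ε := by
    have h4 : s ≤ ε / (K + 1) := min_le_right _ _
    have h5 : s * K ≤ (ε / (K + 1)) * K := mul_le_mul_of_nonneg_right h4 hK0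
    have h6 : (ε / (K + 1)) * K ≤ ε := by
      rw [div_mul_eq_mul_div, div_le_iff₀ (by positivity)]
      nlinarith [hK0, hε.le]
    linarith
  nlinarith [h', hsK]


lemma combo_sq' {E : Type*} [NormedAddCommGroup E] [InnerProductSpace ℝ E]
    (a b u : E) (s : ℝ) :
    ‖s • a + (1 - s) • b - u‖ ^ 2 =
      s * ‖a - u‖ ^ 2 + (1 - s) * ‖b - u‖ ^ 2 - s * (1 - s) * ‖a - b‖ ^ 2 := by
  have h : s • a + (1 - s) • b - u = s • (a - u) + (1 - s) • (b - u) := by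
    match_scalars <;> ring
  have h2 : ‖a - b‖ ^ 2 = ‖(a - u) - (b - u)‖ ^ 2 := by rw [sub_sub_sub_cancel_right]
  rw [h, h2, norm_add_sq_real, norm_sub_sq_real (a - u) (b - u), norm_smul, norm_smul,
    real_inner_smul_left, real_inner_smul_right]
  simp only [Real.norm_eq_abs, mul_pow, sq_abs]
  ring

lemma exp_sq' {E : Type*} [NormedAddCommGroup E] [InnerProductSpace ℝ E]
    (a b : E) (η : ℝ) :
    ‖a + η • b‖ ^ 2 = ‖a‖ ^ 2 + 2 * η * inner ℝ a b + η ^ 2 * ‖b‖ ^ 2 := by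
  rw [norm_add_sq_real, real_inner_smul_right, norm_smul]
  simp only [Real.norm_eq_abs, mul_pow, sq_abs]
  ring

/-- the regret-style inequality for the proximal update
`x_{t+1} = argmin_{x ∈ B} (1/2)‖x - (x_t - η v_t)‖² + η g(x)` on the ball
`B = {x : ‖x‖ ≤ r}`, where `F = F̂ + g`, `F̂` is convex on `B`, `g` is `β`-strongly convex
on `B`, and `w_t` is a subgradient of `F̂` at `x_t`. -/
theorem stmt_4 {d : ℕ} (r β η : ℝ) (hr : 0 < r) (hβ : 0 < β) (hη : 0 < η)
    (Fhat g : EuclideanSpace ℝ (Fin d) → ℝ)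
    (hFhat : ConvexOn ℝ {y : EuclideanSpace ℝ (Fin d) | ‖y‖ ≤ r} Fhat)
    (hgsc : ∀ x : EuclideanSpace ℝ (Fin d), ‖x‖ ≤ r → ∀ y : EuclideanSpace ℝ (Fin d),
      ‖y‖ ≤ r → ∀ s ∈ Set.Icc (0 : ℝ) 1,
      g (s • x + (1 - s) • y) ≤ s * g x + (1 - s) * g y - β / 2 * s * (1 - s) * ‖x - y‖ ^ 2)
    (T : ℕ) (x v w : ℕ → EuclideanSpace ℝ (Fin d))
    (hxB : ∀ t, ‖x t‖ ≤ r)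
    (hupd : ∀ t, 1 ≤ t → t ≤ T → ∀ y : EuclideanSpace ℝ (Fin d), ‖y‖ ≤ r →
      (1 / 2) * ‖x (t + 1) - (x t - η • v t)‖ ^ 2 + η * g (x (t + 1)) ≤
        (1 / 2) * ‖y - (x t - η • v t)‖ ^ 2 + η * g y)
    (hw : ∀ t, 1 ≤ t → t ≤ T → ∀ y : EuclideanSpace ℝ (Fin d), ‖y‖ ≤ r →
      Fhat (x t) + (inner ℝ (w t) (y - x t) : ℝ) ≤ Fhat y)
    (xx : EuclideanSpace ℝ (Fin d)) (hxx : ‖xx‖ ≤ r) :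
    ∑ t ∈ Finset.Icc 1 T, (Fhat (x t) + g (x (t + 1)) - Fhat xx - g xx) ≤
      ‖xx - x 1‖ ^ 2 / (2 * η) + η / 2 * ∑ t ∈ Finset.Icc 1 T, ‖v t‖ ^ 2 +
        ∑ t ∈ Finset.Icc 1 T, (inner ℝ (xx - x t) (v t - w t) : ℝ) -
        β / 2 * ∑ t ∈ Finset.Icc 1 T, ‖xx - x (t + 1)‖ ^ 2 := by
  have hanneg : ∀ t : ℕ, (0 : ℝ) ≤ ‖xx - x t‖ ^ 2 := fun t => sq_nonneg _
  -- per-step inequality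
  have hstep : ∀ t ∈ Finset.Icc 1 T,
      Fhat (x t) + g (x (t + 1)) - Fhat xx - g xx ≤
        (‖xx - x t‖ ^ 2 - ‖xx - x (t + 1)‖ ^ 2) / (2 * η) + η / 2 * ‖v t‖ ^ 2 +
          (inner ℝ (xx - x t) (v t - w t) : ℝ) - β / 2 * ‖xx - x (t + 1)‖ ^ 2 := by
    intro t ht
    rw [Finset.mem_Icc] at ht
    obtain ⟨ht1, ht2⟩ := ht
    set u : EuclideanSpace ℝ (Fin d) := x t - η • v t with hu
    set x' : EuclideanSpace ℝ (Fin d) := x (t + 1) with hx'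
    -- Step B: quadratic growth at the minimizer
    have hK : (1 + η * β) / 2 * ‖xx - x'‖ ^ 2 ≤
        ((1 / 2) * ‖xx - u‖ ^ 2 + η * g xx) - ((1 / 2) * ‖x' - u‖ ^ 2 + η * g x') := by
      refine aux_limit_real _ _ (by positivity) fun s hs0 hs1 => ?_
      set z : EuclideanSpace ℝ (Fin d) := s • xx + (1 - s) • x' with hz
      have hzB : ‖z‖ ≤ r := by
        have hb1 : s * ‖xx‖ ≤ s * r := mul_le_mul_of_nonneg_left hxx hs0.le
        have hb2 : (1 - s) * ‖x'‖ ≤ (1 - s) * r :=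
          mul_le_mul_of_nonneg_left (hxB (t + 1)) (by linarith)
        calc ‖z‖ ≤ ‖s • xx‖ + ‖(1 - s) • x'‖ := norm_add_le _ _
        _ = s * ‖xx‖ + (1 - s) * ‖x'‖ := by
            rw [norm_smul, norm_smul]
            simp [Real.norm_eq_abs, abs_of_nonneg hs0.le,
              abs_of_nonneg (by linarith : (0:ℝ) ≤ 1 - s)]
        _ ≤ s * r + (1 - s) * r := by linarith
        _ = r := by ring
      have h1 : (1 / 2) * ‖x' - u‖ ^ 2 + η * g x' ≤ (1 / 2) * ‖z - u‖ ^ 2 + η * g z :=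
        hupd t ht1 ht2 z hzB
      have h2 : ‖z - u‖ ^ 2 =
          s * ‖xx - u‖ ^ 2 + (1 - s) * ‖x' - u‖ ^ 2 - s * (1 - s) * ‖xx - x'‖ ^ 2 :=
        combo_sq' xx x' u s
      have h3 : η * g z ≤ η * (s * g xx + (1 - s) * g x' - β / 2 * s * (1 - s) * ‖xx - x'‖ ^ 2) :=
        mul_le_mul_of_nonneg_left (hgsc xx hxx x' (hxB (t + 1)) s ⟨hs0.le, hs1⟩) hη.le
      rw [h2] at h1
      have h7 : s * ((1 + η * β) / 2 * ‖xx - x'‖ ^ 2 * (1 - s)) ≤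
          s * (((1 / 2) * ‖xx - u‖ ^ 2 + η * g xx) - ((1 / 2) * ‖x' - u‖ ^ 2 + η * g x')) := by
        nlinarith [h1, h3]
      exact (mul_le_mul_iff_right₀ hs0).mp h7
    -- Step C: expansions
    have hxxu : xx - u = (xx - x t) + η • v t := by rw [hu]; abel
    have hxu : x' - u = (x' - x t) + η • v t := by rw [hu]; abel
    have e1 : ‖xx - u‖ ^ 2 = ‖xx - x t‖ ^ 2 + 2 * η * (inner ℝ (xx - x t) (v t) : ℝ)
        + η ^ 2 * ‖v t‖ ^ 2 := by rw [hxxu, exp_sq']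
    have e2 : ‖x' - u‖ ^ 2 = ‖x' - x t‖ ^ 2 + 2 * η * (inner ℝ (x' - x t) (v t) : ℝ)
        + η ^ 2 * ‖v t‖ ^ 2 := by rw [hxu, exp_sq']
    have eyoung : (0 : ℝ) ≤ ‖x' - x t‖ ^ 2 + 2 * η * (inner ℝ (x' - x t) (v t) : ℝ)
        + η ^ 2 * ‖v t‖ ^ 2 := by rw [← exp_sq']; positivity
    -- subgradient
    have hsub : Fhat (x t) - Fhat xx ≤ - (inner ℝ (xx - x t) (w t) : ℝ) := by
      have h := hw t ht1 ht2 xx hxx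
      rw [real_inner_comm] at h
      linarith
    have hinner : (inner ℝ (xx - x t) (v t - w t) : ℝ) =
        (inner ℝ (xx - x t) (v t) : ℝ) - (inner ℝ (xx - x t) (w t) : ℝ) := inner_sub_right _ _ _
    -- g part
    have hgpart : g x' - g xx ≤
        (‖xx - x t‖ ^ 2 - ‖xx - x'‖ ^ 2) / (2 * η) + η / 2 * ‖v t‖ ^ 2 +
          (inner ℝ (xx - x t) (v t) : ℝ) - β / 2 * ‖xx - x'‖ ^ 2 := by
      refine le_of_mul_le_mul_left ?_ hη
      have hid : η * ((‖xx - x t‖ ^ 2 - ‖xx - x'‖ ^ 2) / (2 * η) + η / 2 * ‖v t‖ ^ 2 +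
          (inner ℝ (xx - x t) (v t) : ℝ) - β / 2 * ‖xx - x'‖ ^ 2) =
          (‖xx - x t‖ ^ 2 - ‖xx - x'‖ ^ 2) / 2 + η * (η / 2 * ‖v t‖ ^ 2) +
          η * (inner ℝ (xx - x t) (v t) : ℝ) - η * (β / 2 * ‖xx - x'‖ ^ 2) := by
        field_simp
      rw [hid]
      linarith [hK, e1, e2, eyoung]
    rw [hinner]
    linarith [hsub, hgpart]
  -- sum up
  have hsum := Finset.sum_le_sum hstep
  have hsplit : ∑ t ∈ Finset.Icc 1 T,
      ((‖xx - x t‖ ^ 2 - ‖xx - x (t + 1)‖ ^ 2) / (2 * η) + η / 2 * ‖v t‖ ^ 2 +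
        (inner ℝ (xx - x t) (v t - w t) : ℝ) - β / 2 * ‖xx - x (t + 1)‖ ^ 2) =
      (∑ t ∈ Finset.Icc 1 T, (‖xx - x t‖ ^ 2 - ‖xx - x (t + 1)‖ ^ 2)) / (2 * η) +
        η / 2 * ∑ t ∈ Finset.Icc 1 T, ‖v t‖ ^ 2 +
        ∑ t ∈ Finset.Icc 1 T, (inner ℝ (xx - x t) (v t - w t) : ℝ) -
        β / 2 * ∑ t ∈ Finset.Icc 1 T, ‖xx - x (t + 1)‖ ^ 2 := by
    rw [Finset.sum_sub_distrib, Finset.sum_add_distrib, Finset.sum_add_distrib,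
      ← Finset.sum_div, ← Finset.mul_sum, ← Finset.mul_sum]
  have htel : ∑ t ∈ Finset.Icc 1 T, (‖xx - x t‖ ^ 2 - ‖xx - x (t + 1)‖ ^ 2) =
      ‖xx - x 1‖ ^ 2 - ‖xx - x (T + 1)‖ ^ 2 := by
    rw [← Finset.Ico_add_one_right_eq_Icc, Finset.sum_Ico_eq_sum_range]
    have h := Finset.sum_range_sub' (fun i => ‖xx - x (1 + i)‖ ^ 2) T
    simp only [Nat.add_zero] at h
    calc ∑ i ∈ Finset.range T, (‖xx - x (1 + i)‖ ^ 2 - ‖xx - x (1 + i + 1)‖ ^ 2)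
        = ∑ i ∈ Finset.range T, (‖xx - x (1 + i)‖ ^ 2 - ‖xx - x (1 + (i + 1))‖ ^ 2) := by
          apply Finset.sum_congr rfl; intro i _; congr 2
      _ = ‖xx - x 1‖ ^ 2 - ‖xx - x (1 + T)‖ ^ 2 := h
      _ = ‖xx - x 1‖ ^ 2 - ‖xx - x (T + 1)‖ ^ 2 := by rw [Nat.add_comm 1 T]
  have hfin : (‖xx - x 1‖ ^ 2 - ‖xx - x (T + 1)‖ ^ 2) / (2 * η) ≤ ‖xx - x 1‖ ^ 2 / (2 * η) :=
    div_le_div_of_nonneg_right (by linarith [hanneg (T + 1)]) (by positivity)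
  calc ∑ t ∈ Finset.Icc 1 T, (Fhat (x t) + g (x (t + 1)) - Fhat xx - g xx) ≤ _ := hsum
    _ = (‖xx - x 1‖ ^ 2 - ‖xx - x (T + 1)‖ ^ 2) / (2 * η) +
        η / 2 * ∑ t ∈ Finset.Icc 1 T, ‖v t‖ ^ 2 +
        ∑ t ∈ Finset.Icc 1 T, (inner ℝ (xx - x t) (v t - w t) : ℝ) -
        β / 2 * ∑ t ∈ Finset.Icc 1 T, ‖xx - x (t + 1)‖ ^ 2 := by rw [hsplit, htel]
    _ ≤ ‖xx - x 1‖ ^ 2 / (2 * η) + η / 2 * ∑ t ∈ Finset.Icc 1 T, ‖v t‖ ^ 2 +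
        ∑ t ∈ Finset.Icc 1 T, (inner ℝ (xx - x t) (v t - w t) : ℝ) -
        β / 2 * ∑ t ∈ Finset.Icc 1 T, ‖xx - x (t + 1)‖ ^ 2 := by linarith [hfin]
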